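/- arXiv:2511.13605 — 5 statements merged into one kernel-verified Lean document; each statement's English description precedes it below -/
import Mathlib

section
/- For any nonnegative monotone submodular function f on a finite ground set E with multilinear extension F, any real p ∈ [0,1], and any vectors x, y ∈ [0,1]^E with y ≥ p·x coordinatewise, we have F(y) ≥ p·F(x). -/
open Finset

/-- The multilinear extension of a set function. -/
noncomputable def multilinear {E : Type*} [Fintype E] [DecidableEq E]
    (f : Finset E → ℝ) (x : E → ℝ) : ℝ :=
  ∑ S : Finset E, f S * (∏ i ∈ S, x i) * ∏ i ∈ Sᶜ, (1 - x i)

section Aux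
set_option linter.unusedSectionVars false
variable {E : Type*} [Fintype E] [DecidableEq E]

/-- single coordinate monotonicity -/
lemma mono_one (f : Finset E → ℝ) (hmono : ∀ S T, S ⊆ T → f S ≤ f T)
    (k : E) (u v : E → ℝ) (hu : ∀ i, u i ∈ Set.Icc (0:ℝ) 1)
    (hagree : ∀ i, i ≠ k → u i = v i) (huv : u k ≤ v k) :
    multilinear f u ≤ multilinear f v := by
  have key : ∀ w : E → ℝ, multilinear f w =
      ∑ S ∈ (univ.erase k).powerset,
        ((∏ i ∈ S, w i) * ∏ i ∈ Sᶜ.erase k, (1 - w i)) *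
          (f S + w k * (f (insert k S) - f S)) := by
    intro w
    have h1 : multilinear f w = ∑ S ∈ (univ.erase k).powerset,
        (f S * (∏ i ∈ S, w i) * ∏ i ∈ Sᶜ, (1 - w i)) +
        ∑ S ∈ (univ.erase k).powerset,
        (f (insert k S) * (∏ i ∈ (insert k S), w i) * ∏ i ∈ (insert k S)ᶜ, (1 - w i)) := by
      have huniv : (univ : Finset E) = insert k (univ.erase k) :=
        (Finset.insert_erase (Finset.mem_univ k)).symm
      rw [multilinear, ← Finset.powerset_univ]
      conv_lhs => rw [huniv]
      rw [Finset.sum_powerset_insert (Finset.notMem_erase k univ)]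
    rw [h1, ← Finset.sum_add_distrib]
    apply Finset.sum_congr rfl
    intro S hS
    have hkS : k ∉ S := fun h => (Finset.notMem_erase k univ) (Finset.mem_powerset.mp hS h)
    have hkSc : k ∈ Sᶜ := Finset.mem_compl.mpr hkS
    rw [compl_insert, Finset.prod_insert hkS, ← Finset.mul_prod_erase Sᶜ _ hkSc]
    ring
  rw [key u, key v]
  apply Finset.sum_le_sum
  intro S hS
  have hkS : k ∉ S := fun h => (Finset.notMem_erase k univ) (Finset.mem_powerset.mp hS h)
  have e1 : (∏ i ∈ S, u i) = ∏ i ∈ S, v i :=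
    Finset.prod_congr rfl fun i hi => hagree i (fun h => hkS (h ▸ hi))
  have e2 : (∏ i ∈ Sᶜ.erase k, (1 - u i)) = ∏ i ∈ Sᶜ.erase k, (1 - v i) :=
    Finset.prod_congr rfl fun i hi => by rw [hagree i (Finset.ne_of_mem_erase hi)]
  rw [e1, e2]
  have hC : 0 ≤ (∏ i ∈ S, v i) * ∏ i ∈ Sᶜ.erase k, (1 - v i) := by
    apply mul_nonneg
    · exact Finset.prod_nonneg fun i hi => by
        rw [← hagree i (fun h => hkS (h ▸ hi))]; exact (hu i).1
    · exact Finset.prod_nonneg fun i hi => by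
        rw [← hagree i (Finset.ne_of_mem_erase hi)]
        linarith [(hu i).2]
  have hmarg : 0 ≤ f (insert k S) - f S := by
    linarith [hmono S (insert k S) (Finset.subset_insert k S)]
  have := mul_le_mul_of_nonneg_right huv hmarg
  nlinarith [hC, this]

lemma mono_all (f : Finset E → ℝ) (hmono : ∀ S T, S ⊆ T → f S ≤ f T)
    (z y : E → ℝ) (hz : ∀ i, z i ∈ Set.Icc (0:ℝ) 1) (hy : ∀ i, y i ∈ Set.Icc (0:ℝ) 1)
    (hzy : ∀ i, z i ≤ y i) : multilinear f z ≤ multilinear f y := by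
  have key : ∀ A : Finset E,
      multilinear f z ≤ multilinear f (fun i => if i ∈ A then y i else z i) := by
    intro A
    induction A using Finset.induction_on with
    | empty => simp
    | @insert k A hk ih =>
      refine le_trans ih (mono_one f hmono k _ _ ?_ ?_ ?_)
      · intro i
        split
        · exact hy i
        · exact hz i
      · intro i hik
        simp only [Finset.mem_insert]
        rcases eq_or_ne i k with rfl | h
        · exact absurd rfl hik
        · simp [h]
      · simp only [Finset.mem_insert, if_pos (Or.inl rfl), if_neg hk]
        exact hzy k
  have := key Finset.univ
  simpa using this

lemma wsum_one (p : ℝ) (T : Finset E) :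
    ∑ S ∈ T.powerset, p ^ S.card * (1 - p) ^ (T \ S).card = 1 := by
  have := Finset.prod_add (fun _ : E => p) (fun _ : E => 1 - p) T
  simp only [Finset.prod_const] at this
  simp only [add_sub_cancel, one_pow] at this
  exact this.symm

lemma gsum_ge (f : Finset E → ℝ)
    (hsub : ∀ S T : Finset E, S ⊆ T → ∀ i ∉ T,
      f (insert i T) - f T ≤ f (insert i S) - f S)
    (p : ℝ) (hp0 : 0 ≤ p) (hp1 : p ≤ 1) (T : Finset E) :
    p * f T + (1 - p) * f ∅ ≤
      ∑ S ∈ T.powerset, p ^ S.card * (1 - p) ^ (T \ S).card * f S := by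
  induction T using Finset.induction_on with
  | empty =>
    simp only [Finset.powerset_empty, Finset.sum_singleton, Finset.card_empty, pow_zero,
      Finset.sdiff_empty, one_mul]
    have : p * f ∅ + (1 - p) * f ∅ = f ∅ := by ring
    linarith
  | @insert k T hk ih =>
    rw [Finset.sum_powerset_insert hk]
    have e1 : ∀ S ∈ T.powerset,
        p ^ S.card * (1 - p) ^ ((insert k T) \ S).card * f S
          = (1 - p) * (p ^ S.card * (1 - p) ^ (T \ S).card * f S) := by
      intro S hS
      have hkS : k ∉ S := fun h => hk (Finset.mem_powerset.mp hS h)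
      have : (insert k T) \ S = insert k (T \ S) := by
        rw [Finset.insert_sdiff_of_notMem _ hkS]
      rw [this, Finset.card_insert_of_notMem (fun h => hk (Finset.mem_sdiff.mp h).1)]
      ring
    have e2 : ∀ S ∈ T.powerset,
        p * (p ^ S.card * (1 - p) ^ (T \ S).card) * (f S + (f (insert k T) - f T)) ≤
        p ^ (insert k S).card * (1 - p) ^ ((insert k T) \ (insert k S)).card * f (insert k S) := by
      intro S hS
      have hST : S ⊆ T := Finset.mem_powerset.mp hS
      have hkS : k ∉ S := fun h => hk (hST h)
      have hc : (insert k S).card = S.card + 1 := Finset.card_insert_of_notMem hkS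
      have hd : (insert k T) \ (insert k S) = T \ S := by
        ext i
        have hik : i ∈ T → i ≠ k := fun h he => hk (he ▸ h)
        simp only [Finset.mem_sdiff, Finset.mem_insert, not_or]
        tauto
      have hw : 0 ≤ p * (p ^ S.card * (1 - p) ^ (T \ S).card) := by
        apply mul_nonneg hp0 (mul_nonneg (pow_nonneg hp0 _) (pow_nonneg (by linarith) _))
      have hf : f S + (f (insert k T) - f T) ≤ f (insert k S) := by
        have := hsub S T hST k hk
        linarith
      calc p * (p ^ S.card * (1 - p) ^ (T \ S).card) * (f S + (f (insert k T) - f T))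
          ≤ p * (p ^ S.card * (1 - p) ^ (T \ S).card) * f (insert k S) :=
            mul_le_mul_of_nonneg_left hf hw
        _ = p ^ (insert k S).card * (1 - p) ^ ((insert k T) \ (insert k S)).card * f (insert k S) := by
            rw [hc, hd]; ring
    have step : ∑ S ∈ T.powerset, p * (p ^ S.card * (1 - p) ^ (T \ S).card) * (f S + (f (insert k T) - f T))
        ≤ ∑ S ∈ T.powerset, p ^ (insert k S).card * (1 - p) ^ ((insert k T) \ (insert k S)).card * f (insert k S) :=
      Finset.sum_le_sum e2
    have expand : ∑ S ∈ T.powerset, p * (p ^ S.card * (1 - p) ^ (T \ S).card) * (f S + (f (insert k T) - f T))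
        = p * (∑ S ∈ T.powerset, p ^ S.card * (1 - p) ^ (T \ S).card * f S)
          + p * (f (insert k T) - f T) * (∑ S ∈ T.powerset, p ^ S.card * (1 - p) ^ (T \ S).card) := by
      rw [Finset.mul_sum, Finset.mul_sum, ← Finset.sum_add_distrib]
      apply Finset.sum_congr rfl; intro S _; ring
    rw [Finset.sum_congr rfl e1, ← Finset.mul_sum]
    have hws := wsum_one (E := E) p T
    rw [hws, mul_one] at expand
    linarith [step, expand, ih]

lemma identity (f : Finset E → ℝ) (p : ℝ) (x : E → ℝ) :
    multilinear f (fun i => p * x i)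
      = ∑ T : Finset E, (∏ i ∈ T, x i) * (∏ i ∈ Tᶜ, (1 - x i)) *
          ∑ S ∈ T.powerset, p ^ S.card * (1 - p) ^ (T \ S).card * f S := by
  have lhs_eq : multilinear f (fun i => p * x i)
      = ∑ q ∈ (univ : Finset (Finset E)).sigma (fun S => Sᶜ.powerset),
          f q.1 * (∏ i ∈ q.1, p * x i) *
            ((∏ i ∈ q.2, (1 - p) * x i) * ∏ i ∈ q.1ᶜ \ q.2, (1 - x i)) := by
    rw [multilinear, Finset.sum_sigma]
    apply Finset.sum_congr rfl
    intro S _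
    dsimp only
    rw [← Finset.mul_sum]
    congr 1
    have h : ∀ i ∈ Sᶜ, (1 : ℝ) - p * x i = (1 - p) * x i + (1 - x i) := by
      intro i _; ring
    rw [Finset.prod_congr rfl h, Finset.prod_add]
  have rhs_eq : (∑ T : Finset E, (∏ i ∈ T, x i) * (∏ i ∈ Tᶜ, (1 - x i)) *
          ∑ S ∈ T.powerset, p ^ S.card * (1 - p) ^ (T \ S).card * f S)
      = ∑ q ∈ (univ : Finset (Finset E)).sigma (fun T => T.powerset),
          (∏ i ∈ q.1, x i) * (∏ i ∈ q.1ᶜ, (1 - x i)) *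
            (p ^ q.2.card * (1 - p) ^ (q.1 \ q.2).card * f q.2) := by
    rw [Finset.sum_sigma]
    apply Finset.sum_congr rfl
    intro T _
    dsimp only
    rw [← Finset.mul_sum]
  rw [lhs_eq, rhs_eq]
  apply Finset.sum_nbij' (i := fun q => (⟨q.1 ∪ q.2, q.1⟩ : Σ _ : Finset E, Finset E))
    (j := fun q => (⟨q.2, q.1 \ q.2⟩ : Σ _ : Finset E, Finset E))
  · rintro ⟨S, U⟩ hq
    simp only [Finset.mem_sigma, Finset.mem_powerset]
    exact ⟨Finset.mem_univ _, Finset.subset_union_left⟩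
  · rintro ⟨T, S⟩ hq
    simp only [Finset.mem_sigma, Finset.mem_powerset] at hq ⊢
    refine ⟨Finset.mem_univ _, ?_⟩
    intro i hi
    rw [Finset.mem_compl]
    exact (Finset.mem_sdiff.mp hi).2
  · rintro ⟨S, U⟩ hq
    simp only [Finset.mem_sigma, Finset.mem_powerset] at hq
    have hdisj : Disjoint S U := Finset.disjoint_left.mpr
      (fun {i} hiS hiU => (Finset.mem_compl.mp (hq.2 hiU)) hiS)
    dsimp only
    rw [Finset.union_sdiff_cancel_left hdisj]
  · rintro ⟨T, S⟩ hq
    simp only [Finset.mem_sigma, Finset.mem_powerset] at hq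
    dsimp only
    rw [Finset.union_sdiff_of_subset hq.2]
  · rintro ⟨S, U⟩ hq
    simp only [Finset.mem_sigma, Finset.mem_powerset] at hq
    have hdisj : Disjoint S U := Finset.disjoint_left.mpr
      (fun {i} hiS hiU => (Finset.mem_compl.mp (hq.2 hiU)) hiS)
    have e1 : (∏ i ∈ S, p * x i) = p ^ S.card * ∏ i ∈ S, x i := by
      rw [Finset.prod_mul_distrib, Finset.prod_const]
    have e2 : (∏ i ∈ U, (1 - p) * x i) = (1 - p) ^ U.card * ∏ i ∈ U, x i := by
      rw [Finset.prod_mul_distrib, Finset.prod_const]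
    have e3 : Sᶜ \ U = (S ∪ U)ᶜ := by
      ext i
      simp only [Finset.mem_sdiff, Finset.mem_compl, Finset.mem_union, not_or]
    have e4 : (S ∪ U) \ S = U := Finset.union_sdiff_cancel_left hdisj
    have e5 : (∏ i ∈ S ∪ U, x i) = (∏ i ∈ S, x i) * ∏ i ∈ U, x i :=
      Finset.prod_union hdisj
    simp only [e1, e2, e3, e4, e5]
    ring

end Aux

/-- For nonnegative monotone submodular `f` with multilinear extension `F`,
`p ∈ [0,1]` and `y ≥ p·x` coordinatewise with `x, y ∈ [0,1]^E`, we have `F(y) ≥ p·F(x)`. -/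
theorem stmt0 {E : Type*} [Fintype E] [DecidableEq E] (f : Finset E → ℝ)
    (hnn : ∀ S, 0 ≤ f S)
    (hmono : ∀ S T, S ⊆ T → f S ≤ f T)
    (hsub : ∀ S T : Finset E, S ⊆ T → ∀ i ∉ T,
      f (insert i T) - f T ≤ f (insert i S) - f S)
    (p : ℝ) (hp : p ∈ Set.Icc (0 : ℝ) 1)
    (x y : E → ℝ)
    (hx : ∀ i, x i ∈ Set.Icc (0 : ℝ) 1) (hy : ∀ i, y i ∈ Set.Icc (0 : ℝ) 1)
    (hyx : ∀ i, p * x i ≤ y i) :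
    p * multilinear f x ≤ multilinear f y := by
  obtain ⟨hp0, hp1⟩ := hp
  have hpx : ∀ i, p * x i ∈ Set.Icc (0 : ℝ) 1 := by
    intro i
    constructor
    · exact mul_nonneg hp0 (hx i).1
    · exact mul_le_one₀ hp1 (hx i).1 (hx i).2
  have step1 : p * multilinear f x
      = ∑ T : Finset E, (∏ i ∈ T, x i) * (∏ i ∈ Tᶜ, (1 - x i)) * (p * f T) := by
    rw [multilinear, Finset.mul_sum]
    apply Finset.sum_congr rfl
    intro T _
    ring
  have step2 : ∀ T : Finset E,
      (∏ i ∈ T, x i) * (∏ i ∈ Tᶜ, (1 - x i)) * (p * f T)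
        ≤ (∏ i ∈ T, x i) * (∏ i ∈ Tᶜ, (1 - x i)) *
            ∑ S ∈ T.powerset, p ^ S.card * (1 - p) ^ (T \ S).card * f S := by
    intro T
    have hw : 0 ≤ (∏ i ∈ T, x i) * (∏ i ∈ Tᶜ, (1 - x i)) :=
      mul_nonneg (Finset.prod_nonneg fun i _ => (hx i).1)
        (Finset.prod_nonneg fun i _ => by linarith [(hx i).2])
    have hg : p * f T ≤ ∑ S ∈ T.powerset, p ^ S.card * (1 - p) ^ (T \ S).card * f S := by
      have h1 := gsum_ge f hsub p hp0 hp1 T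
      have h2 : 0 ≤ (1 - p) * f ∅ := mul_nonneg (by linarith) (hnn ∅)
      linarith
    exact mul_le_mul_of_nonneg_left hg hw
  calc p * multilinear f x
      = ∑ T : Finset E, (∏ i ∈ T, x i) * (∏ i ∈ Tᶜ, (1 - x i)) * (p * f T) := step1
    _ ≤ ∑ T : Finset E, (∏ i ∈ T, x i) * (∏ i ∈ Tᶜ, (1 - x i)) *
          ∑ S ∈ T.powerset, p ^ S.card * (1 - p) ^ (T \ S).card * f S :=
        Finset.sum_le_sum fun T _ => step2 T
    _ = multilinear f (fun i => p * x i) := (identity f p x).symm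
    _ ≤ multilinear f y := mono_all f hmono _ y hpx hy hyx
end

section
/- For any nonnegative submodular function f on a finite ground set E and any nonnegative vector x ∈ [0,1]^E, the function r ↦ F(r·x) is concave on [0,1], where F is the multilinear extension of f. -/
open Finset

section Aux

set_option linter.unusedSectionVars false
set_option linter.unusedVariables false

variable {E : Type*} [Fintype E] [DecidableEq E]

/-- Per-coordinate factor of the multilinear extension along `r ↦ r • x`. -/
noncomputable def hF (x : E → ℝ) (k : E) (S : Finset E) (r : ℝ) : ℝ :=
  if k ∈ S then r * x k else 1 - r * x k

/-- Derivative (in `r`) of the per-coordinate factor. -/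
noncomputable def dF (x : E → ℝ) (k : E) (S : Finset E) : ℝ :=
  if k ∈ S then x k else -(x k)

lemma hasDerivAt_hF (x : E → ℝ) (k : E) (S : Finset E) (r : ℝ) :
    HasDerivAt (fun r => hF x k S r) (dF x k S) r := by
  unfold hF dF
  split_ifs with hk
  · simpa using (hasDerivAt_id r).mul_const (x k)
  · simpa using ((hasDerivAt_id r).mul_const (x k)).const_sub 1

lemma continuous_hF (x : E → ℝ) (k : E) (S : Finset E) :
    Continuous (fun r => hF x k S r) := by
  unfold hF; split_ifs <;> fun_prop

lemma hF_nonneg (x : E → ℝ) (hx : ∀ i, x i ∈ Set.Icc (0 : ℝ) 1) (k : E) (S : Finset E)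
    {r : ℝ} (hr0 : 0 ≤ r) (hr1 : r ≤ 1) : 0 ≤ hF x k S r := by
  have h1 := (hx k).1
  have h2 := (hx k).2
  unfold hF; split_ifs <;> nlinarith

lemma hasDerivAt_prodH (x : E → ℝ) (u : Finset E) (S : Finset E) (r : ℝ) :
    HasDerivAt (fun r => ∏ k ∈ u, hF x k S r)
      (∑ i ∈ u, (∏ j ∈ u.erase i, hF x j S r) * dF x i S) r := by
  have := HasDerivAt.fun_finsetProd (u := u) (f := fun k r => hF x k S r)
    (f' := fun k => dF x k S) (x := r) (fun i _ => hasDerivAt_hF x i S r)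
  simpa [smul_eq_mul] using this

end Aux

set_option linter.unusedVariables false in
/-- For nonnegative submodular `f` and `x ∈ [0,1]^E`, the map `r ↦ F(r·x)` is
concave on `[0,1]`. -/
theorem stmt1 {E : Type*} [Fintype E] [DecidableEq E] (f : Finset E → ℝ)
    (hnn : ∀ S, 0 ≤ f S)
    (hsub : ∀ S T : Finset E, S ⊆ T → ∀ i ∉ T,
      f (insert i T) - f T ≤ f (insert i S) - f S)
    (x : E → ℝ) (hx : ∀ i, x i ∈ Set.Icc (0 : ℝ) 1) :
    ConcaveOn ℝ (Set.Icc (0 : ℝ) 1) (fun r : ℝ => multilinear f (fun i => r * x i)) := by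
  -- rewrite the function
  have hg : (fun r : ℝ => multilinear f (fun i => r * x i))
      = fun r => ∑ S ∈ (univ : Finset E).powerset, f S * ∏ k ∈ univ, hF x k S r := by
    funext r
    rw [multilinear, powerset_univ]
    refine Finset.sum_congr rfl fun S _ => ?_
    rw [mul_assoc]
    congr 1
    rw [← Finset.prod_mul_prod_compl S (fun k => hF x k S r)]
    congr 1
    · exact Finset.prod_congr rfl fun k hk => by rw [hF, if_pos hk]
    · exact Finset.prod_congr rfl fun k hk => by rw [hF, if_neg (mem_compl.mp hk)]
  rw [hg]
  -- the derivatives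
  set g1 : ℝ → ℝ := fun r => ∑ S ∈ (univ : Finset E).powerset,
    f S * ∑ i ∈ univ, (∏ j ∈ univ.erase i, hF x j S r) * dF x i S with hg1
  set g2 : ℝ → ℝ := fun r => ∑ S ∈ (univ : Finset E).powerset,
    f S * ∑ i ∈ univ, (∑ j ∈ (univ : Finset E).erase i,
      (∏ k ∈ ((univ : Finset E).erase i).erase j, hF x k S r) * dF x j S) * dF x i S with hg2
  have hd1 : ∀ r : ℝ, HasDerivAt
      (fun r => ∑ S ∈ (univ : Finset E).powerset, f S * ∏ k ∈ univ, hF x k S r) (g1 r) r := by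
    intro r
    exact HasDerivAt.fun_sum fun S _ => (hasDerivAt_prodH x univ S r).const_mul (f S)
  have hd2 : ∀ r : ℝ, HasDerivAt g1 (g2 r) r := by
    intro r
    refine HasDerivAt.fun_sum fun S _ => HasDerivAt.const_mul (f S) ?_
    exact HasDerivAt.fun_sum fun i _ =>
      (hasDerivAt_prodH x (univ.erase i) S r).mul_const (dF x i S)
  -- second derivative is nonpositive on [0,1]
  have hsign : ∀ r : ℝ, 0 ≤ r → r ≤ 1 → g2 r ≤ 0 := by
    intro r hr0 hr1
    have key : ∀ i ∈ (univ : Finset E), ∀ j ∈ (univ : Finset E).erase i,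
        ∑ S ∈ (univ : Finset E).powerset,
          f S * (∏ k ∈ ((univ : Finset E).erase i).erase j, hF x k S r)
            * dF x j S * dF x i S ≤ 0 := by
      intro i _ j hj
      set u : Finset E := ((univ : Finset E).erase i).erase j with hu
      have hji : j ≠ i := (mem_erase.mp hj).1
      have hiu : i ∉ u := fun h => (mem_erase.mp (mem_of_mem_erase h)).1 rfl
      have hju : j ∉ u := fun h => (mem_erase.mp h).1 rfl
      have hins : (univ : Finset E) = insert i (insert j u) := by
        rw [hu, insert_erase hj, insert_erase (mem_univ i)]
      have hiju : i ∉ insert j u := by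
        simp only [mem_insert]
        rintro (h | h)
        · exact hji h.symm
        · exact hiu h
      have expand : ∀ φ : Finset E → ℝ, ∑ S ∈ (univ : Finset E).powerset, φ S
          = ∑ T ∈ u.powerset, (φ T + φ (insert j T) + (φ (insert i T)
            + φ (insert i (insert j T)))) := by
        intro φ
        conv_lhs => rw [hins]
        rw [Finset.sum_powerset_insert hiju, Finset.sum_powerset_insert hju,
          Finset.sum_powerset_insert hju, ← Finset.sum_add_distrib,
          ← Finset.sum_add_distrib, ← Finset.sum_add_distrib]
      rw [expand]
      refine Finset.sum_nonpos fun T hT => ?_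
      have hTu : T ⊆ u := mem_powerset.mp hT
      have hiT : i ∉ T := fun h => hiu (hTu h)
      have hjT : j ∉ T := fun h => hju (hTu h)
      have hijT : i ∉ insert j T := by
        simp only [mem_insert]
        rintro (h | h)
        · exact hji h.symm
        · exact hiT h
      have hjiT : j ∉ insert i T := by
        simp only [mem_insert]
        rintro (h | h)
        · exact hji h
        · exact hjT h
      -- products are equal
      have hQ : ∀ S : Finset E, (∀ k ∈ u, (k ∈ S ↔ k ∈ T)) →
          (∏ k ∈ u, hF x k S r) = ∏ k ∈ u, hF x k T r := fun S h =>
        Finset.prod_congr rfl fun k hk => by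
          unfold hF; rw [if_congr (h k hk) rfl rfl]
      have hmem : ∀ k ∈ u, k ≠ i ∧ k ≠ j := fun k hk =>
        ⟨(mem_erase.mp (mem_of_mem_erase hk)).1, (mem_erase.mp hk).1⟩
      have e1 : (∏ k ∈ u, hF x k (insert j T) r) = ∏ k ∈ u, hF x k T r :=
        hQ _ fun k hk => by simp [mem_insert, (hmem k hk).2]
      have e2 : (∏ k ∈ u, hF x k (insert i T) r) = ∏ k ∈ u, hF x k T r :=
        hQ _ fun k hk => by simp [mem_insert, (hmem k hk).1]
      have e3 : (∏ k ∈ u, hF x k (insert i (insert j T)) r) = ∏ k ∈ u, hF x k T r :=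
        hQ _ fun k hk => by simp [mem_insert, (hmem k hk).1, (hmem k hk).2]
      -- dF values
      have d1 : dF x i T = -(x i) := by rw [dF, if_neg hiT]
      have d2 : dF x j T = -(x j) := by rw [dF, if_neg hjT]
      have d3 : dF x i (insert j T) = -(x i) := by rw [dF, if_neg hijT]
      have d4 : dF x j (insert j T) = x j := by rw [dF, if_pos (mem_insert_self j T)]
      have d5 : dF x i (insert i T) = x i := by rw [dF, if_pos (mem_insert_self i T)]
      have d6 : dF x j (insert i T) = -(x j) := by rw [dF, if_neg hjiT]
      have d7 : dF x i (insert i (insert j T)) = x i := by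
        rw [dF, if_pos (mem_insert_self i _)]
      have d8 : dF x j (insert i (insert j T)) = x j := by
        rw [dF, if_pos (mem_insert_of_mem (mem_insert_self j T))]
      have hW : 0 ≤ ∏ k ∈ u, hF x k T r :=
        Finset.prod_nonneg fun k _ => hF_nonneg x hx k T hr0 hr1
      have hxi := (hx i).1
      have hxj := (hx j).1
      have hs : f (insert i (insert j T)) - f (insert j T) ≤ f (insert i T) - f T :=
        hsub T (insert j T) (Finset.subset_insert j T) i hijT
      rw [e1, e2, e3, d1, d2, d3, d4, d5, d6, d7, d8]
      have hprod : (∏ k ∈ u, hF x k T r) * (x i * x j)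
          * (f (insert i (insert j T)) - f (insert j T) - f (insert i T) + f T) ≤ 0 :=
        mul_nonpos_of_nonneg_of_nonpos
          (mul_nonneg hW (mul_nonneg hxi hxj)) (by linarith)
      nlinarith [hprod]
    -- rearrange g2 into the triple sum
    have rearr : g2 r = ∑ i ∈ (univ : Finset E), ∑ j ∈ (univ : Finset E).erase i,
        ∑ S ∈ (univ : Finset E).powerset,
          f S * (∏ k ∈ ((univ : Finset E).erase i).erase j, hF x k S r)
            * dF x j S * dF x i S := by
      rw [hg2]
      have step1 : ∀ S : Finset E,
          f S * ∑ i ∈ univ, (∑ j ∈ (univ : Finset E).erase i,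
            (∏ k ∈ ((univ : Finset E).erase i).erase j, hF x k S r) * dF x j S) * dF x i S
          = ∑ i ∈ (univ : Finset E), ∑ j ∈ (univ : Finset E).erase i,
            f S * (∏ k ∈ ((univ : Finset E).erase i).erase j, hF x k S r)
              * dF x j S * dF x i S := by
        intro S
        rw [Finset.mul_sum]
        refine Finset.sum_congr rfl fun i _ => ?_
        rw [Finset.sum_mul, Finset.mul_sum]
        exact Finset.sum_congr rfl fun jj _ => by ring
      calc (∑ S ∈ (univ : Finset E).powerset,
            f S * ∑ i ∈ univ, (∑ j ∈ (univ : Finset E).erase i,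
              (∏ k ∈ ((univ : Finset E).erase i).erase j, hF x k S r) * dF x j S) * dF x i S)
          = ∑ S ∈ (univ : Finset E).powerset, ∑ i ∈ (univ : Finset E),
              ∑ j ∈ (univ : Finset E).erase i,
              f S * (∏ k ∈ ((univ : Finset E).erase i).erase j, hF x k S r)
                * dF x j S * dF x i S := Finset.sum_congr rfl fun S _ => step1 S
        _ = ∑ i ∈ (univ : Finset E), ∑ S ∈ (univ : Finset E).powerset,
              ∑ j ∈ (univ : Finset E).erase i,
              f S * (∏ k ∈ ((univ : Finset E).erase i).erase j, hF x k S r)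
                * dF x j S * dF x i S := Finset.sum_comm
        _ = ∑ i ∈ (univ : Finset E), ∑ j ∈ (univ : Finset E).erase i,
              ∑ S ∈ (univ : Finset E).powerset,
              f S * (∏ k ∈ ((univ : Finset E).erase i).erase j, hF x k S r)
                * dF x j S * dF x i S :=
            Finset.sum_congr rfl fun i _ => Finset.sum_comm
    rw [rearr]
    refine Finset.sum_nonpos fun i hi => Finset.sum_nonpos fun j hj => key i hi j hj
  -- continuity
  have hcont : Continuous
      (fun r : ℝ => ∑ S ∈ (univ : Finset E).powerset, f S * ∏ k ∈ univ, hF x k S r) :=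
    continuous_finset_sum _ fun S _ => continuous_const.mul
      (continuous_finset_prod _ fun k _ => continuous_hF x k S)
  refine concaveOn_of_hasDerivWithinAt2_nonpos (convex_Icc 0 1) hcont.continuousOn
    (f' := g1) (f'' := g2) (fun r hr => (hd1 r).hasDerivWithinAt)
    (fun r hr => (hd2 r).hasDerivWithinAt) (fun r hr => ?_)
  rw [interior_Icc] at hr
  exact hsign r hr.1.le hr.2.le
end

section
/- Let f be a subadditive nonnegative set function on a finite ground set E, let A ⊆ E, k ≥ 1, ε ∈ (0,1), and let L(A) = {e ∈ A : f({e}) ≥ (ε/k)·max_{e'∈A} f({e'})}. Then max{f(S) : S ⊆ L(A), |S| ≤ k} ≥ (1−ε)·max{f(S) : S ⊆ A, |S| ≤ k}. -/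
open Finset
open scoped Classical

lemma sum_bound_aux {E : Type*} [DecidableEq E] (f : Finset E → ℝ)
    (hsubadd : ∀ S T : Finset E, f (S ∪ T) ≤ f S + f T)
    (S : Finset E) : ∀ T : Finset E, f (S ∪ T) ≤ f S + ∑ e ∈ T, f {e} := by
  intro T
  induction T using Finset.induction_on with
  | empty => simp
  | @insert a T ha ih =>
    have h1 : S ∪ insert a T = {a} ∪ (S ∪ T) := by
      rw [Finset.union_insert, Finset.insert_eq]
    rw [h1, Finset.sum_insert ha]
    calc f ({a} ∪ (S ∪ T)) ≤ f {a} + f (S ∪ T) := hsubadd _ _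
      _ ≤ f {a} + (f S + ∑ e ∈ T, f {e}) := by linarith
      _ = f S + (f {a} + ∑ e ∈ T, f {e}) := by ring

/-- For subadditive nonnegative `f`, restricting to large elements
`L(A) = {e ∈ A : f({e}) ≥ (ε/k)·max_{e'∈A} f({e'})}` loses at most a `(1−ε)` factor in the
cardinality-constrained maximum. -/
theorem stmt4 {E : Type*} [DecidableEq E] (f : Finset E → ℝ)
    (hnn : ∀ S, 0 ≤ f S)
    (hsubadd : ∀ S T : Finset E, f (S ∪ T) ≤ f S + f T)
    (A : Finset E) (hA : A.Nonempty) (k : ℕ) (hk : 1 ≤ k)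
    (ε : ℝ) (hε : ε ∈ Set.Ioo (0 : ℝ) 1) :
    (1 - ε) * ((A.powerset.filter (fun S => S.card ≤ k)).sup'
        ⟨∅, by simp⟩ f)
      ≤ (((A.filter (fun e =>
            (ε / k) * (A.sup' hA fun e' => f {e'}) ≤ f {e})).powerset.filter
          (fun S => S.card ≤ k)).sup' ⟨∅, by simp⟩ f) := by
  obtain ⟨hε0, hε1⟩ := hε
  set M := A.sup' hA fun e' => f {e'} with hM
  set L := A.filter (fun e => (ε / k) * M ≤ f {e}) with hLdef
  -- M ≥ 0
  obtain ⟨a, haA⟩ := id hA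
  have hM0 : 0 ≤ M := le_trans (hnn {a}) (Finset.le_sup' (fun e' => f {e'}) haA)
  -- get maximizer S*
  obtain ⟨S, hSmem, hSeq⟩ :=
    Finset.exists_mem_eq_sup' (⟨∅, by simp⟩ : (A.powerset.filter fun S => S.card ≤ k).Nonempty) f
  rw [hSeq]
  rw [Finset.mem_filter, Finset.mem_powerset] at hSmem
  obtain ⟨hSA, hSk⟩ := hSmem
  set SL := S.filter (fun e => (ε / k) * M ≤ f {e}) with hSL
  set SS := S.filter (fun e => ¬ (ε / k) * M ≤ f {e}) with hSS
  have hunion : S = SL ∪ SS := (Finset.filter_union_filter_not_eq _ S).symm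
  -- f S ≤ f SL + ε M
  have hsum : ∑ e ∈ SS, f {e} ≤ ε * M := by
    have h1 : ∑ e ∈ SS, f {e} ≤ ∑ e ∈ SS, (ε / k) * M := by
      apply Finset.sum_le_sum
      intro e he
      rw [hSS, Finset.mem_filter] at he
      linarith [he.2]
    have h2 : (SS.card : ℝ) ≤ (k : ℝ) := by
      have : SS.card ≤ k := le_trans (Finset.card_le_card (Finset.filter_subset _ _)) hSk
      exact_mod_cast this
    have hk0 : (0:ℝ) < k := by exact_mod_cast hk
    calc ∑ e ∈ SS, f {e} ≤ SS.card * ((ε / k) * M) := by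
            rw [Finset.sum_const, nsmul_eq_mul] at h1; exact h1
      _ ≤ k * ((ε / k) * M) := by
            apply mul_le_mul_of_nonneg_right h2
            positivity
      _ = ε * M := by field_simp
  have hfS : f S ≤ f SL + ε * M := by
    have := sum_bound_aux f hsubadd SL SS
    rw [← hunion] at this
    linarith
  -- f SL ≤ RHS
  set RHS := ((L.powerset.filter (fun S => S.card ≤ k)).sup' ⟨∅, by simp⟩ f) with hR
  have hSLmem : SL ∈ L.powerset.filter (fun S => S.card ≤ k) := by
    rw [Finset.mem_filter, Finset.mem_powerset]
    constructor
    · rw [hSL, hLdef]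
      exact Finset.filter_subset_filter _ hSA
    · exact le_trans (Finset.card_le_card (Finset.filter_subset _ _)) hSk
  have hSLle : f SL ≤ RHS := Finset.le_sup' f hSLmem
  -- M ≤ RHS : the singleton of the max element is in L
  obtain ⟨b, hbA, hbeq⟩ := Finset.exists_mem_eq_sup' hA (fun e' => f {e'})
  have hbM : f {b} = M := hbeq.symm
  have hbL : b ∈ L := by
    rw [hLdef, Finset.mem_filter]
    refine ⟨hbA, ?_⟩
    rw [hbM]
    have hεk : ε / k ≤ 1 := by
      have hk1 : (1:ℝ) ≤ k := by exact_mod_cast hk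
      rw [div_le_one (by linarith)]; linarith
    nlinarith
  have hbmem : ({b} : Finset E) ∈ L.powerset.filter (fun S => S.card ≤ k) := by
    rw [Finset.mem_filter, Finset.mem_powerset]
    exact ⟨Finset.singleton_subset_iff.mpr hbL, by simpa using hk⟩
  have hMle : M ≤ RHS := by
    calc M = f {b} := hbM.symm
      _ ≤ RHS := Finset.le_sup' f hbmem
  have hbA' : ({b} : Finset E) ∈ A.powerset.filter (fun S => S.card ≤ k) := by
    rw [Finset.mem_filter, Finset.mem_powerset]
    exact ⟨Finset.singleton_subset_iff.mpr hbA, by simpa using hk⟩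
  have hMfS : M ≤ f S := by
    rw [← hbM, ← hSeq]; exact Finset.le_sup' f hbA'
  nlinarith [hnn S, hnn SL]
end

section
/- Let f be a monotone submodular function with f(∅)=0 and total curvature c ∈ (0,1], and define g(S) = (1/c)·(f(S) − (1−c)·∑_{i∈S} f({i})). Then g is nonnegative, monotone, and submodular, and g(S) ≤ f(S) for all S ⊆ E. -/
open Finset

/-- Curvature decomposition: for monotone submodular normalized `f` with total curvature
`c ∈ (0,1]`, the function `g(S) = (1/c)·(f(S) − (1−c)·∑_{i∈S} f({i}))` is nonnegative,
monotone and submodular, and satisfies `g ≤ f`. -/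
theorem stmt6 {E : Type*} [Fintype E] [DecidableEq E] (f : Finset E → ℝ)
    (hnn : ∀ S, 0 ≤ f S) (h0 : f ∅ = 0)
    (hmono : ∀ S T, S ⊆ T → f S ≤ f T)
    (hsub : ∀ S T : Finset E, S ⊆ T → ∀ i ∉ T,
      f (insert i T) - f T ≤ f (insert i S) - f S)
    (c : ℝ) (hc : c ∈ Set.Ioc (0 : ℝ) 1)
    (hcurv : ∀ i : E, (1 - c) * f {i} ≤ f Finset.univ - f (Finset.univ.erase i))
    (g : Finset E → ℝ)
    (hg : ∀ S, g S = (1 / c) * (f S - (1 - c) * ∑ i ∈ S, f {i})) :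
    (∀ S, 0 ≤ g S) ∧
    (∀ S T, S ⊆ T → g S ≤ g T) ∧
    (∀ S T : Finset E, S ⊆ T → ∀ i ∉ T,
      g (insert i T) - g T ≤ g (insert i S) - g S) ∧
    (∀ S, g S ≤ f S) := by
  obtain ⟨hc0, hc1⟩ := hc
  have hcinv : (0:ℝ) ≤ 1 / c := by positivity
  -- marginal gain bounded below by (1-c) f{i}
  have hgain : ∀ (S : Finset E) (i : E), i ∉ S →
      (1 - c) * f {i} ≤ f (insert i S) - f S := by
    intro S i hi
    refine (hcurv i).trans ?_
    have hS : S ⊆ Finset.univ.erase i := by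
      intro x hx
      exact Finset.mem_erase.2 ⟨fun h => hi (h ▸ hx), Finset.mem_univ x⟩
    have := hsub S (Finset.univ.erase i) hS i (Finset.notMem_erase i _)
    rwa [Finset.insert_erase (Finset.mem_univ i)] at this
  -- difference formula
  have hdiff : ∀ (S : Finset E) (i : E), i ∉ S →
      g (insert i S) - g S
        = (1 / c) * (f (insert i S) - f S - (1 - c) * f {i}) := by
    intro S i hi
    rw [hg, hg, Finset.sum_insert hi]
    ring
  -- single-step monotonicity
  have hstep : ∀ (S : Finset E) (i : E), i ∉ S → g S ≤ g (insert i S) := by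
    intro S i hi
    have h1 := hgain S i hi
    have : 0 ≤ g (insert i S) - g S := by
      rw [hdiff S i hi]
      have : 0 ≤ f (insert i S) - f S - (1 - c) * f {i} := by linarith
      positivity
    linarith
  -- monotone
  have gmono : ∀ S T, S ⊆ T → g S ≤ g T := by
    intro S T hST
    suffices h : ∀ n (S : Finset E), S ⊆ T → (T \ S).card = n → g S ≤ g T from
      h _ S hST rfl
    intro n
    induction n with
    | zero =>
      intro S hST hn
      have : T \ S = ∅ := Finset.card_eq_zero.mp hn
      have hTS : T ⊆ S := fun x hx => by
        by_contra h
        exact absurd (Finset.mem_sdiff.2 ⟨hx, h⟩) (by simp [this])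
      rw [Finset.Subset.antisymm hST hTS]
    | succ n ih =>
      intro S hST hn
      have hne : (T \ S).Nonempty := by
        rw [← Finset.card_pos, hn]; omega
      obtain ⟨i, hi⟩ := hne
      rw [Finset.mem_sdiff] at hi
      have h1 : g S ≤ g (insert i S) := hstep S i hi.2
      have h2 : insert i S ⊆ T := Finset.insert_subset hi.1 hST
      have hcard : (T \ insert i S).card = n := by
        have : T \ insert i S = (T \ S).erase i := by
          ext x; simp [Finset.mem_sdiff, Finset.mem_erase, and_comm, or_imp]
          tauto
        rw [this, Finset.card_erase_of_mem (Finset.mem_sdiff.2 hi), hn]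
        omega
      exact h1.trans (ih (insert i S) h2 hcard)
  -- nonneg
  have hg0 : g ∅ = 0 := by simp [hg, h0]
  refine ⟨fun S => hg0 ▸ gmono ∅ S (Finset.empty_subset S), gmono, ?_, ?_⟩
  · intro S T hST i hiT
    have hiS : i ∉ S := fun h => hiT (hST h)
    rw [hdiff S i hiS, hdiff T i hiT]
    have := hsub S T hST i hiT
    have h2 : f (insert i T) - f T - (1 - c) * f {i}
        ≤ f (insert i S) - f S - (1 - c) * f {i} := by linarith
    exact mul_le_mul_of_nonneg_left h2 hcinv
  · -- g ≤ f, using subadditivity f S ≤ ∑ f{i}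
    have hsubadd : ∀ S : Finset E, f S ≤ ∑ i ∈ S, f {i} := by
      intro S
      induction S using Finset.induction_on with
      | empty => simp [h0]
      | @insert a s hi ih =>
        rw [Finset.sum_insert hi]
        have := hsub ∅ s (Finset.empty_subset s) a hi
        simp only [h0, Finset.insert_empty] at this
        linarith
    intro S
    rw [hg]
    have hs := hsubadd S
    have h1 : f S - (1 - c) * ∑ i ∈ S, f {i} ≤ f S - (1 - c) * f S := by
      have : (1 - c) * f S ≤ (1 - c) * ∑ i ∈ S, f {i} :=
        mul_le_mul_of_nonneg_left hs (by linarith)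
      linarith
    calc (1 / c) * (f S - (1 - c) * ∑ i ∈ S, f {i})
        ≤ (1 / c) * (f S - (1 - c) * f S) := mul_le_mul_of_nonneg_left h1 hcinv
      _ = f S := by field_simp; ring
end

section
/- Let V > 0, ε ∈ (0,1), and let φ : [0,1] → ℝ be continuously differentiable, nondecreasing, with φ(0) ≥ 0 and φ(1) ≤ (1 − 1/e − ε)·V. Then the Lebesgue measure of the set {t ∈ [0,1] : φ(t) + φ'(t) < V(1−ε)} is at least ε. -/
open MeasureTheory

/-- Core of approximate-or-separate: if `φ` is `C¹`, nondecreasing, `φ(0) ≥ 0` and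
`φ(1) ≤ (1 − 1/e − ε)·V`, then the set `{t ∈ [0,1] : φ(t) + φ'(t) < V(1−ε)}`
has Lebesgue measure at least `ε`. -/
theorem stmt12 (V ε : ℝ) (hV : 0 < V) (hε : ε ∈ Set.Ioo (0 : ℝ) 1)
    (φ φ' : ℝ → ℝ)
    (hderiv : ∀ t ∈ Set.Icc (0 : ℝ) 1, HasDerivAt φ (φ' t) t)
    (hcont : ContinuousOn φ' (Set.Icc (0 : ℝ) 1))
    (hmono : MonotoneOn φ (Set.Icc (0 : ℝ) 1))
    (h0 : 0 ≤ φ 0)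
    (h1 : φ 1 ≤ (1 - Real.exp (-1) - ε) * V) :
    ENNReal.ofReal ε ≤ volume {t ∈ Set.Icc (0 : ℝ) 1 | φ t + φ' t < V * (1 - ε)} := by
  obtain ⟨hε0, hε1⟩ := hε
  set c : ℝ := V * (1 - ε) with hc_def
  have hexp : (0:ℝ) < Real.exp (-1) := Real.exp_pos _
  -- gap lower bound at 1
  have hgap1 : V * Real.exp (-1) ≤ c - φ 1 := by
    rw [hc_def]; nlinarith
  have hgap1' : (0:ℝ) < c - φ 1 := lt_of_lt_of_le (by positivity) hgap1
  have hgappos : ∀ t ∈ Set.Icc (0:ℝ) 1, 0 < c - φ t := by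
    intro t ht
    have : φ t ≤ φ 1 := hmono ht (by norm_num) ht.2
    linarith
  -- φ' nonneg on [0,1]
  have hφ'nonneg : ∀ t ∈ Set.Icc (0:ℝ) 1, 0 ≤ φ' t := by
    intro t ht
    have hs := hasDerivAt_iff_tendsto_slope.1 (hderiv t ht)
    rcases lt_or_eq_of_le ht.2 with h | h
    · have h2 : Filter.Tendsto (slope φ t) (nhdsWithin t (Set.Ioi t)) (nhds (φ' t)) :=
        hs.mono_left (nhdsWithin_mono _ (fun y hy => ne_of_gt hy))
      refine ge_of_tendsto h2 ?_
      filter_upwards [Ioo_mem_nhdsGT_of_mem ⟨le_refl t, h⟩] with y hy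
      have hy1 : y ∈ Set.Icc (0:ℝ) 1 := ⟨le_trans ht.1 hy.1.le, hy.2.le⟩
      rw [slope_def_field]
      exact div_nonneg (sub_nonneg.2 (hmono ht hy1 hy.1.le)) (sub_nonneg.2 hy.1.le)
    · have h0t : (0:ℝ) < t := by rw [h]; norm_num
      have h2 : Filter.Tendsto (slope φ t) (nhdsWithin t (Set.Iio t)) (nhds (φ' t)) :=
        hs.mono_left (nhdsWithin_mono _ (fun y hy => ne_of_lt hy))
      refine ge_of_tendsto h2 ?_
      filter_upwards [Ioo_mem_nhdsLT_of_mem ⟨h0t, le_refl t⟩] with y hy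
      have hy1 : y ∈ Set.Icc (0:ℝ) 1 := ⟨hy.1.le, le_trans hy.2.le ht.2⟩
      have hm := hmono hy1 ht hy.2.le
      rw [slope_def_field]
      have h1 : φ y - φ t ≤ 0 := by linarith
      have h2 : y - t < 0 := sub_neg.2 hy.2
      have h3 : (y - t)⁻¹ ≤ 0 := inv_nonpos.2 h2.le
      rw [div_eq_mul_inv]
      nlinarith
  -- the derivative of ψ = -log(c - φ)
  set ψ : ℝ → ℝ := fun t => -Real.log (c - φ t) with hψ_def
  set ψ' : ℝ → ℝ := fun t => φ' t / (c - φ t) with hψ'_def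
  have hψderiv : ∀ t ∈ Set.Icc (0:ℝ) 1, HasDerivAt ψ (ψ' t) t := by
    intro t ht
    have hg : HasDerivAt (fun t => c - φ t) (-φ' t) t := by
      exact (hderiv t ht).const_sub c
    have := (hg.log (ne_of_gt (hgappos t ht))).neg
    rw [show ψ' t = -(-φ' t / (c - φ t)) by show φ' t / (c - φ t) = _; ring]
    exact this
  -- continuity of φ and ψ'
  have hφcont : ContinuousOn φ (Set.Icc (0:ℝ) 1) :=
    fun t ht => (hderiv t ht).continuousAt.continuousWithinAt
  have hψ'cont : ContinuousOn ψ' (Set.Icc (0:ℝ) 1) :=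
    hcont.div ((continuousOn_const).sub hφcont) (fun t ht => ne_of_gt (hgappos t ht))
  -- FTC
  have hFTC : ∫ t in (0:ℝ)..1, ψ' t = ψ 1 - ψ 0 := by
    apply intervalIntegral.integral_eq_sub_of_hasDerivAt
    · intro t ht
      rw [Set.uIcc_of_le (by norm_num : (0:ℝ) ≤ 1)] at ht
      exact hψderiv t ht
    · rw [intervalIntegrable_iff_integrableOn_Icc_of_le (by norm_num : (0:ℝ) ≤ 1)]
      exact hψ'cont.integrableOn_compact isCompact_Icc
  -- sets
  set A : Set ℝ := {t ∈ Set.Icc (0:ℝ) 1 | c ≤ φ t + φ' t} with hA_def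
  set B : Set ℝ := {t ∈ Set.Icc (0:ℝ) 1 | φ t + φ' t < c} with hB_def
  have hAclosed : IsClosed A := by
    have : A = Set.Icc (0:ℝ) 1 ∩ (fun t => φ t + φ' t) ⁻¹' Set.Ici c := by
      ext t; simp only [hA_def, Set.mem_setOf_eq, Set.mem_inter_iff, Set.mem_preimage, Set.mem_Ici]
    rw [this]
    exact ContinuousOn.preimage_isClosed_of_isClosed (hφcont.add hcont) isClosed_Icc isClosed_Ici
  have hAsub : A ⊆ Set.Icc (0:ℝ) 1 := fun t ht => ht.1
  have hBsub : B ⊆ Set.Icc (0:ℝ) 1 := fun t ht => ht.1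
  have hAfin : volume A ≠ ⊤ := by
    exact ne_top_of_le_ne_top (by simp) (measure_mono hAsub)
  have hBfin : volume B ≠ ⊤ := by
    exact ne_top_of_le_ne_top (by simp) (measure_mono hBsub)
  -- integrability on Ioc
  have hint : IntegrableOn ψ' (Set.Icc (0:ℝ) 1) volume :=
    hψ'cont.integrableOn_compact isCompact_Icc
  have hintIoc : IntegrableOn ψ' (Set.Ioc (0:ℝ) 1) volume :=
    hint.mono_set Set.Ioc_subset_Icc_self
  -- lower bound the integral by vol(A)
  set A' : Set ℝ := A ∩ Set.Ioc (0:ℝ) 1 with hA'_def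
  have hA'meas : MeasurableSet A' := hAclosed.measurableSet.inter measurableSet_Ioc
  have hvolA' : volume A' = volume A := by
    have h1 : A \ {(0:ℝ)} ⊆ A' := by
      intro t ht
      refine ⟨ht.1, ?_, (hAsub ht.1).2⟩
      rcases lt_or_eq_of_le (hAsub ht.1).1 with h | h
      · exact h
      · exact absurd h.symm (by simpa using ht.2)
    have h2 : volume A ≤ volume A' := by
      calc volume A = volume (A \ {(0:ℝ)}) := by
            rw [measure_diff_null (by simp)]
        _ ≤ volume A' := measure_mono h1
    exact le_antisymm (measure_mono Set.inter_subset_left) h2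
  have hstep1 : (volume A).toReal ≤ ∫ t in A', ψ' t := by
    rw [← hvolA']
    have := setIntegral_ge_of_const_le_real (c := 1) hA'meas
      (by rw [hvolA']; exact hAfin)
      (fun t ht => by
        have htI : t ∈ Set.Icc (0:ℝ) 1 := hAsub ht.1
        have hg := hgappos t htI
        rw [le_div_iff₀ hg]
        have := ht.1.2
        linarith)
      (hintIoc.mono_set Set.inter_subset_right)
    rw [one_mul] at this
    exact this
  have hstep2 : ∫ t in A', ψ' t ≤ ∫ t in (0:ℝ)..1, ψ' t := by
    rw [intervalIntegral.integral_of_le (by norm_num : (0:ℝ) ≤ 1)]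
    apply setIntegral_mono_set hintIoc
    · filter_upwards [ae_restrict_mem measurableSet_Ioc] with t ht
      exact div_nonneg (hφ'nonneg t (Set.Ioc_subset_Icc_self ht))
        (hgappos t (Set.Ioc_subset_Icc_self ht)).le
    · exact HasSubset.Subset.eventuallyLE Set.inter_subset_right
  -- upper bound ψ 1 - ψ 0
  have hub : ψ 1 - ψ 0 ≤ 1 + Real.log (1 - ε) := by
    have hg0 := hgappos 0 (by norm_num)
    have l1 : Real.log (c - φ 0) ≤ Real.log c :=
      Real.log_le_log hg0 (by linarith)
    have l2 : Real.log (V * Real.exp (-1)) ≤ Real.log (c - φ 1) :=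
      Real.log_le_log (by positivity) hgap1
    have e1 : Real.log c = Real.log V + Real.log (1 - ε) := by
      rw [hc_def, Real.log_mul (ne_of_gt hV) (by linarith)]
    have e2 : Real.log (V * Real.exp (-1)) = Real.log V + (-1) := by
      rw [Real.log_mul (ne_of_gt hV) (ne_of_gt hexp), Real.log_exp]
    simp only [hψ_def]
    linarith
  have hlog : Real.log (1 - ε) ≤ -ε := by
    have := Real.log_le_sub_one_of_pos (by linarith : (0:ℝ) < 1 - ε)
    linarith
  -- combine: vol A ≤ 1 - ε
  have hA_le : (volume A).toReal ≤ 1 - ε := by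
    have := hstep1.trans hstep2
    rw [hFTC] at this
    linarith
  -- vol A + vol B ≥ 1
  have hcover : Set.Icc (0:ℝ) 1 ⊆ A ∪ B := by
    intro t ht
    rcases le_or_gt c (φ t + φ' t) with h | h
    · exact Or.inl ⟨ht, h⟩
    · exact Or.inr ⟨ht, h⟩
  have hsum : (1:ℝ) ≤ (volume A).toReal + (volume B).toReal := by
    have h1 : volume (Set.Icc (0:ℝ) 1) ≤ volume A + volume B :=
      le_trans (measure_mono hcover) (measure_union_le A B)
    have h2 : (volume (Set.Icc (0:ℝ) 1)).toReal = 1 := by simp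
    calc (1:ℝ) = (volume (Set.Icc (0:ℝ) 1)).toReal := h2.symm
      _ ≤ (volume A + volume B).toReal := by
          apply ENNReal.toReal_mono (by finiteness) h1
      _ = (volume A).toReal + (volume B).toReal := ENNReal.toReal_add hAfin hBfin
  have : ε ≤ (volume B).toReal := by linarith
  exact ENNReal.ofReal_le_of_le_toReal this
end
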